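/- The following statements are equivalent: (a) 𝓜₁ := {(λ∘A_u, λ(ω_u)) : (u,λ) ∈ 𝒰×S⁺} + ℝ₊(0_{X*},1) is a closed and convex subset of X*×ℝ (weak*-topology on X* times the usual topology on ℝ), where ℝ₊(0_{X*},1) := {(0,μ) : μ ≥ 0}; (b) for every c ∈ X* such that inf_{x∈F} ⟨c,x⟩ > −∞, there exists (ū, λ̄) ∈ 𝒰 × S⁺ with λ̄∘A_ū = −c and −λ̄(ω_ū) = inf_{x∈F} ⟨c,x⟩ (stable robust strong duality for the pair (RLP_c)–(RLD_c)). -/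

import Mathlib

open Pointwise Topology

section AuxStmt7

variable {X : Type*} [AddCommGroup X] [Module ℝ X] [TopologicalSpace X]

/-- The weak-* dual of `X` is locally convex. -/
instance WeakDual.instLocallyConvexSpaceStmt7 : LocallyConvexSpace ℝ (WeakDual ℝ X) :=
  WeakBilin.locallyConvexSpace

/-- Every continuous linear functional on the weak-* dual of `X` is evaluation at a point. -/
lemma weakDual_dual_eval (ψ : WeakDual ℝ X →L[ℝ] ℝ) :
    ∃ x : X, ∀ v : WeakDual ℝ X, ψ v = v x := by
  have hb := LinearMap.hasBasis_weakBilin (topDualPairing ℝ X)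
  have h0 : ψ ⁻¹' Metric.ball (0:ℝ) 1 ∈ 𝓝 (0 : WeakDual ℝ X) := by
    have h := ψ.continuous.tendsto 0
    rw [map_zero] at h
    exact h (Metric.ball_mem_nhds _ one_pos)
  obtain ⟨U, hU, hsub⟩ := hb.mem_iff.1 h0
  obtain ⟨s, r, hr, rfl⟩ := (SeminormFamily.basisSets_iff _).1 hU
  set L : s → (WeakDual ℝ X) →ₗ[ℝ] ℝ := fun i => (topDualPairing ℝ X).flip (i : X) with hL
  have hker : (⨅ i : s, LinearMap.ker (L i)) ≤ LinearMap.ker (ψ : WeakDual ℝ X →ₗ[ℝ] ℝ) := by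
    intro v hv
    simp only [Submodule.mem_iInf, LinearMap.mem_ker] at hv ⊢
    have hv' : ∀ i ∈ s, (v : X →L[ℝ] ℝ) i = 0 := fun i hi => hv ⟨i, hi⟩
    have key : ∀ n : ℕ, (n : ℝ) * |ψ v| < 1 := by
      intro n
      have hmem : (n : ℝ) • v ∈ ((s.sup ((topDualPairing ℝ X).toSeminormFamily)).ball 0 r : Set (WeakDual ℝ X)) := by
        show (s.sup ((topDualPairing ℝ X).toSeminormFamily)) (show X →L[ℝ] ℝ from (n : ℝ) • v - (0 : WeakDual ℝ X)) < r
        rw [sub_zero]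
        rcases s.eq_empty_or_nonempty with h | h
        · simp [h, hr]; exact hr
        · apply Seminorm.finset_sup_apply_lt hr
          intro i hi
          have hvi : ((n : ℝ) • v) i = (n : ℝ) * (v i) := rfl
          have : ((n : ℝ) • v) i = 0 := by rw [hvi, hv' i hi, mul_zero]
          rw [LinearMap.toSeminormFamily_apply]
          show ‖((n : ℝ) • v) i‖ < r
          rw [this]; simpa using hr
      have := hsub hmem
      replace this : ‖ψ ((n : ℝ) • v)‖ < 1 := by rw [← dist_zero_right]; exact this
      have hlin : ψ ((n : ℝ) • v) = (n : ℝ) * ψ v := by rw [map_smul]; simp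
      rw [hlin] at this
      calc (n : ℝ) * |ψ v| = |(n:ℝ) * ψ v| := by rw [abs_mul, Nat.abs_cast]
        _ = ‖(n:ℝ) * ψ v‖ := rfl
        _ < 1 := this
    by_contra hne
    obtain ⟨n, hn⟩ := exists_nat_gt (1 / |ψ v|)
    have habs : 0 < |ψ v| := abs_pos.2 hne
    have := key n
    rw [div_lt_iff₀ habs] at hn
    linarith
  have hspan := mem_span_of_iInf_ker_le_ker (L := L) (K := (ψ : WeakDual ℝ X →ₗ[ℝ] ℝ)) hker
  obtain ⟨c, hc⟩ := (Submodule.mem_span_range_iff_exists_fun ℝ).1 hspan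
  refine ⟨∑ i : s, c i • (i : X), fun v => ?_⟩
  have := congrFun (congrArg (fun (f : WeakDual ℝ X →ₗ[ℝ] ℝ) => (f : WeakDual ℝ X → ℝ)) hc) v
  simp only [LinearMap.coe_sum, Finset.sum_apply, LinearMap.smul_apply] at this
  rw [show ψ v = (ψ : WeakDual ℝ X →ₗ[ℝ] ℝ) v from rfl, ← this]
  rw [map_sum]
  refine Finset.sum_congr rfl fun i _ => ?_
  rw [map_smul]
  rfl

variable {Z : Type*} [AddCommGroup Z] [Module ℝ Z] [TopologicalSpace Z] [IsTopologicalAddGroup Z]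
  [ContinuousSMul ℝ Z] [LocallyConvexSpace ℝ Z]

/-- Bipolar-type result for a closed convex cone. -/
lemma cone_bipolar_stmt7 (S : Set Z) (hS_closed : IsClosed S) (hS_conv : Convex ℝ S)
    (hS_cone : ∀ r : ℝ, 0 ≤ r → ∀ z ∈ S, r • z ∈ S) (h0 : (0 : Z) ∈ S)
    (z : Z) (hz : ∀ l : Z →L[ℝ] ℝ, (∀ w ∈ S, 0 ≤ l w) → l z ≤ 0) : z ∈ -S := by
  by_contra h
  have h' : -z ∉ S := by rwa [Set.mem_neg] at h
  obtain ⟨f, u, hfS, hfz⟩ := geometric_hahn_banach_closed_point hS_conv hS_closed h'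
  have hu : 0 < u := by have := hfS 0 h0; simpa using this
  have hfneg : ∀ w ∈ S, f w ≤ 0 := by
    intro w hw
    by_contra hpos
    push_neg at hpos
    have hr : (0:ℝ) ≤ (u + 1) / f w := by positivity
    have := hfS _ (hS_cone _ hr w hw)
    rw [map_smul, smul_eq_mul, div_mul_cancel₀ _ (ne_of_gt hpos)] at this
    linarith
  have hl : ∀ w ∈ S, 0 ≤ (-f) w := by intro w hw; simpa using hfneg w hw
  have := hz (-f) hl
  simp only [ContinuousLinearMap.neg_apply, neg_nonpos] at this
  rw [map_neg] at hfz
  linarith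

end AuxStmt7

/-- Corollary 2.4 / `thm_lStrD`: characterization of stable robust strong duality for the
robust linear problem (RLP_c) with affine mappings, via the moment cone 𝓜₁. -/
theorem stmt7
    {X Z : Type*}
    [AddCommGroup X] [Module ℝ X] [TopologicalSpace X] [IsTopologicalAddGroup X]
    [ContinuousSMul ℝ X] [LocallyConvexSpace ℝ X] [T2Space X]
    [AddCommGroup Z] [Module ℝ Z] [TopologicalSpace Z] [IsTopologicalAddGroup Z]
    [ContinuousSMul ℝ Z] [LocallyConvexSpace ℝ Z] [T2Space Z]
    (S : Set Z) (hS_ne : S.Nonempty) (hS_closed : IsClosed S) (hS_conv : Convex ℝ S)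
    (hS_cone : ∀ r : ℝ, 0 ≤ r → ∀ z ∈ S, r • z ∈ S)
    {ι : Type*} [Nonempty ι] (A : ι → X →L[ℝ] Z) (ω : ι → Z)
    (hF : {x : X | ∀ u : ι, A u x - ω u ∈ -S}.Nonempty) :
    (IsClosed ({q : WeakDual ℝ X × ℝ | ∃ u : ι, ∃ l : WeakDual ℝ Z,
          (∀ z ∈ S, 0 ≤ l z) ∧ (∀ x : X, q.1 x = l (A u x)) ∧ q.2 = l (ω u)} +
        {q : WeakDual ℝ X × ℝ | q.1 = 0 ∧ 0 ≤ q.2}) ∧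
      Convex ℝ ({q : WeakDual ℝ X × ℝ | ∃ u : ι, ∃ l : WeakDual ℝ Z,
          (∀ z ∈ S, 0 ≤ l z) ∧ (∀ x : X, q.1 x = l (A u x)) ∧ q.2 = l (ω u)} +
        {q : WeakDual ℝ X × ℝ | q.1 = 0 ∧ 0 ≤ q.2})) ↔
    (∀ c : WeakDual ℝ X,
      ⊥ < ⨅ x : {x : X | ∀ u : ι, A u x - ω u ∈ -S}, ((c x.1 : ℝ) : EReal) →
      ∃ u : ι, ∃ l : WeakDual ℝ Z, (∀ z ∈ S, 0 ≤ l z) ∧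
        (∀ x : X, l (A u x) = -(c x)) ∧
        ((-(l (ω u)) : ℝ) : EReal) =
          ⨅ x : {x : X | ∀ u : ι, A u x - ω u ∈ -S}, ((c x.1 : ℝ) : EReal)) := by
  classical
  set F : Set X := {x : X | ∀ u : ι, A u x - ω u ∈ -S} with hFdef
  set M1 : Set (WeakDual ℝ X × ℝ) := {q : WeakDual ℝ X × ℝ | ∃ u : ι, ∃ l : WeakDual ℝ Z,
      (∀ z ∈ S, 0 ≤ l z) ∧ (∀ x : X, q.1 x = l (A u x)) ∧ q.2 = l (ω u)} with hM1def
  set P : Set (WeakDual ℝ X × ℝ) := {q : WeakDual ℝ X × ℝ | q.1 = 0 ∧ 0 ≤ q.2} with hPdef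
  set K : Set (WeakDual ℝ X × ℝ) := {q : WeakDual ℝ X × ℝ | ∀ x ∈ F, q.1 x ≤ q.2} with hKdef
  have h0S : (0 : Z) ∈ S := by
    obtain ⟨z, hz⟩ := hS_ne
    simpa using hS_cone 0 le_rfl z hz
  -- membership in -S gives nonpositivity against S⁺ functionals
  have hneg_le : ∀ (l : WeakDual ℝ Z), (∀ w ∈ S, 0 ≤ l w) → ∀ z ∈ (-S : Set Z), l z ≤ 0 := by
    intro l hl z hz
    rw [Set.mem_neg] at hz
    have := hl _ hz
    rw [map_neg] at this
    linarith
  -- weak duality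
  have weak : ∀ q ∈ M1, ∀ x ∈ F, q.1 x ≤ q.2 := by
    rintro q ⟨u, l, hl, hq1, hq2⟩ x hx
    have h1 : l (A u x - ω u) ≤ 0 := hneg_le l hl _ (hx u)
    rw [map_sub] at h1
    rw [hq1 x, hq2]
    linarith
  have hMK : M1 + P ⊆ K := by
    rintro q ⟨a, ha, b, ⟨hb1, hb2⟩, rfl⟩
    intro x hx
    have h1 : (a + b).1 x = a.1 x + b.1 x := rfl
    have h2 : b.1 x = 0 := by rw [hb1]; rfl
    have := weak a ha x hx
    show (a + b).1 x ≤ (a + b).2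
    rw [h1, h2]
    show a.1 x + 0 ≤ a.2 + b.2
    linarith
  have hK_closed : IsClosed K := by
    have : K = ⋂ x ∈ F, {q : WeakDual ℝ X × ℝ | q.1 x ≤ q.2} := by
      ext q; simp [hKdef]
    rw [this]
    exact isClosed_biInter fun x _ =>
      isClosed_le ((WeakDual.eval_continuous x).comp continuous_fst) continuous_snd
  have hK_conv : Convex ℝ K := by
    intro q hq q' hq' a b ha hb hab
    intro x hx
    have h1 : (a • q + b • q').1 x = a * q.1 x + b * q'.1 x := rfl
    have h2 : (a • q + b • q').2 = a * q.2 + b * q'.2 := rfl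
    rw [h1, h2]
    have := hq x hx
    have := hq' x hx
    nlinarith
  -- the key separation step
  have hKM : IsClosed (M1 + P) → Convex ℝ (M1 + P) → K ⊆ M1 + P := by
    intro hcl hcv q hqK
    by_contra hqM
    obtain ⟨φ, u0, hφq, hφM⟩ := geometric_hahn_banach_point_closed hcv hcl hqM
    -- 0 ∈ M1 + P
    have h0M : (0 : WeakDual ℝ X × ℝ) ∈ M1 + P := by
      refine ⟨0, ⟨Classical.arbitrary ι, 0, ?_, ?_, ?_⟩, 0, ⟨rfl, le_rfl⟩, add_zero 0⟩
      · intro z _; rfl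
      · intro x; rfl
      · rfl
    have hu0 : u0 < 0 := by simpa using hφM 0 h0M
    -- M1 + P is closed under positive scaling
    have hMcone : ∀ b ∈ M1 + P, ∀ r : ℝ, 0 ≤ r → r • b ∈ M1 + P := by
      rintro b ⟨a, ⟨u, l, hl, ha1, ha2⟩, p, ⟨hp1, hp2⟩, rfl⟩ r hr
      refine ⟨r • a, ⟨u, r • l, ?_, ?_, ?_⟩, r • p, ⟨?_, ?_⟩, (smul_add r a p).symm⟩
      · intro z hz
        have := hl z hz
        show 0 ≤ r * l z
        positivity
      · intro x
        show r * a.1 x = r * l (A u x)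
        rw [ha1 x]
      · show r * a.2 = r * l (ω u)
        rw [ha2]
      · show r • p.1 = 0
        rw [hp1, smul_zero]
      · show 0 ≤ r * p.2
        positivity
    -- φ is nonnegative on M1 + P
    have hφ_nonneg : ∀ b ∈ M1 + P, 0 ≤ φ b := by
      intro b hb
      by_contra hneg
      push_neg at hneg
      have hr : (0:ℝ) ≤ (u0 - 1) / φ b :=
        le_of_lt (div_pos_of_neg_of_neg (by linarith) hneg)
      have := hφM _ (hMcone b hb _ hr)
      rw [map_smul, smul_eq_mul, div_mul_cancel₀ _ (ne_of_lt hneg)] at this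
      linarith
    -- decompose φ
    obtain ⟨x0, hx0⟩ := weakDual_dual_eval (φ.comp (ContinuousLinearMap.inl ℝ (WeakDual ℝ X) ℝ))
    set t : ℝ := φ (0, 1) with htdef
    have hφ_eq : ∀ (v : WeakDual ℝ X) (s : ℝ), φ (v, s) = v x0 + s * t := by
      intro v s
      have h1 : (v, s) = ((v, (0:ℝ)) : WeakDual ℝ X × ℝ) + s • ((0 : WeakDual ℝ X), (1:ℝ)) := by
        apply Prod.ext
        · show v = v + s • 0
          rw [smul_zero, add_zero]
        · show s = 0 + s * 1
          ring
      rw [h1, map_add, map_smul, smul_eq_mul]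
      congr 1
      exact hx0 v
    -- t ≥ 0
    have ht : 0 ≤ t := by
      have h01 : ((0 : WeakDual ℝ X), (1:ℝ)) ∈ M1 + P := by
        refine ⟨0, ⟨Classical.arbitrary ι, 0, fun z _ => le_rfl, fun x => rfl, rfl⟩,
          (0, 1), ⟨rfl, zero_le_one⟩, zero_add _⟩
      have := hφ_nonneg _ h01
      have hz : (0 : WeakDual ℝ X) x0 = 0 := rfl
      rw [hφ_eq, hz] at this
      linarith
    -- the main inequality for all (u, l)
    have hmain : ∀ (u : ι) (l : Z →L[ℝ] ℝ), (∀ w ∈ S, 0 ≤ l w) →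
        0 ≤ l (A u x0) + l (ω u) * t := by
      intro u l hl
      have hmem : (((l.comp (A u) : X →L[ℝ] ℝ) : WeakDual ℝ X), l (ω u)) ∈ M1 + P := by
        refine ⟨_, ⟨u, (l : WeakDual ℝ Z), hl, fun x => rfl, rfl⟩, 0, ⟨rfl, le_rfl⟩, add_zero _⟩
      have := hφ_nonneg _ hmem
      have this := this.trans_eq (hφ_eq _ _)
      exact this
    -- φ q < 0
    have hφq0 : q.1 x0 + q.2 * t < 0 := by
      have : φ q < 0 := lt_trans hφq hu0
      rwa [show q = (q.1, q.2) from rfl, hφ_eq] at this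
    rcases lt_or_eq_of_le ht with htpos | ht0
    · -- t > 0 case
      set x1 : X := (-(1/t)) • x0 with hx1def
      have hx1F : x1 ∈ F := by
        intro u
        apply cone_bipolar_stmt7 S hS_closed hS_conv hS_cone h0S
        intro l hl
        have hm := hmain u l hl
        have hA : l (A u x1) = (-(1/t)) * l (A u x0) := by
          rw [hx1def, map_smul, map_smul, smul_eq_mul]
        rw [map_sub, hA]
        rw [div_eq_mul_inv]
        have hti : 0 < t⁻¹ := inv_pos.2 htpos
        have h2 : -(1 * t⁻¹) * l ((A u) x0) - l (ω u)
            = -(t⁻¹ * (l (A u x0) + l (ω u) * t)) := by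
          field_simp
          ring
        rw [h2]
        have : 0 ≤ t⁻¹ * (l (A u x0) + l (ω u) * t) := by positivity
        linarith
      have hle := hqK x1 hx1F
      have hval : q.1 x1 = (-(1/t)) * q.1 x0 := by
        rw [hx1def]
        exact map_smul (q.1 : X →L[ℝ] ℝ) _ _
      rw [hval] at hle
      have h2 : (-(1/t) * q.1 x0) * t ≤ q.2 * t := mul_le_mul_of_nonneg_right hle htpos.le
      have h3 : (-(1/t) * q.1 x0) * t = -q.1 x0 := by field_simp
      nlinarith
    · -- t = 0 case
      rw [← ht0, mul_zero, add_zero] at hφq0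
      obtain ⟨xb, hxb⟩ := hF
      have hxbF : xb ∈ F := hxb
      set r : ℝ := max 0 ((q.2 + 1 - q.1 xb) / (-(q.1 x0))) with hrdef
      have hr0 : 0 ≤ r := le_max_left _ _
      set x1 : X := xb - r • x0 with hx1def
      have hx1F : x1 ∈ F := by
        intro u
        apply cone_bipolar_stmt7 S hS_closed hS_conv hS_cone h0S
        intro l hl
        have hm := hmain u l hl
        rw [← ht0, mul_zero, add_zero] at hm
        have hb : l (A u xb - ω u) ≤ 0 := hneg_le l hl _ (hxbF u)
        have hA : A u x1 - ω u = (A u xb - ω u) - r • (A u x0) := by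
          rw [hx1def, map_sub, map_smul]
          abel
        rw [hA, map_sub, map_smul, smul_eq_mul]
        nlinarith
      have hle := hqK x1 hx1F
      have hval : q.1 x1 = q.1 xb - r * q.1 x0 := by
        rw [hx1def]
        rw [map_sub, map_smul]
        rfl
      rw [hval] at hle
      have hrge : (q.2 + 1 - q.1 xb) / (-(q.1 x0)) ≤ r := le_max_right _ _
      have hpos : 0 < -(q.1 x0) := by linarith
      rw [div_le_iff₀ hpos] at hrge
      nlinarith
  constructor
  · -- (a) → (b)
    rintro ⟨hcl, hcv⟩ c hbot
    set m : EReal := ⨅ x : F, ((c x.1 : ℝ) : EReal) with hmdef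
    obtain ⟨xb, hxb⟩ := hF
    have hxbF : xb ∈ F := hxb
    have hm_top : m ≠ ⊤ := by
      have : m ≤ ((c xb : ℝ) : EReal) := iInf_le _ (⟨xb, hxbF⟩ : F)
      exact ne_top_of_le_ne_top (EReal.coe_ne_top _) this
    have hm_bot : m ≠ ⊥ := ne_of_gt hbot
    set m0 : ℝ := m.toReal with hm0def
    have hm0 : (m0 : EReal) = m := EReal.coe_toReal hm_top hm_bot
    have hle : ∀ x ∈ F, m0 ≤ c x := by
      intro x hx
      have : m ≤ ((c x : ℝ) : EReal) := iInf_le _ (⟨x, hx⟩ : F)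
      rw [← hm0] at this
      exact_mod_cast this
    have hqK : ((-c, -m0) : WeakDual ℝ X × ℝ) ∈ K := by
      intro x hx
      show (-c) x ≤ -m0
      have : (-c) x = -(c x) := rfl
      rw [this]
      have := hle x hx
      linarith
    obtain ⟨a, ⟨u, l, hl, ha1, ha2⟩, b, ⟨hb1, hb2⟩, hab⟩ := hKM hcl hcv hqK
    have ha1' : a.1 = -c := by
      have h1 : a.1 + b.1 = -c := congrArg Prod.fst hab
      rw [hb1, add_zero] at h1
      exact h1
    have ha2' : a.2 + b.2 = -m0 := congrArg Prod.snd hab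
    refine ⟨u, l, hl, ?_, ?_⟩
    · intro x
      have := ha1 x
      rw [ha1'] at this
      have hcx : (-c) x = -(c x) := rfl
      rw [hcx] at this
      linarith
    · -- value equality
      have hlω : l (ω u) = -m0 - b.2 := by rw [← ha2]; linarith
      -- weak duality: ∀ x ∈ F, -(l (ω u)) ≤ c x
      have hwd : ∀ x ∈ F, m0 + b.2 ≤ c x := by
        intro x hx
        have := weak a ⟨u, l, hl, ha1, ha2⟩ x hx
        rw [ha1', ha2] at this
        have hcx : (-c) x = -(c x) := rfl
        rw [hcx] at this
        rw [hlω] at this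
        linarith
      have hb20 : b.2 = 0 := by
        have h1 : ((m0 + b.2 : ℝ) : EReal) ≤ m := by
          rw [hmdef]
          exact le_iInf fun x => by exact_mod_cast hwd x.1 x.2
        rw [← hm0] at h1
        have : m0 + b.2 ≤ m0 := by exact_mod_cast h1
        linarith
      have : -(l (ω u)) = m0 := by rw [hlω, hb20]; ring
      rw [this, hm0]
  · -- (b) → (a)
    intro hsd
    have hKeq : M1 + P = K := by
      apply Set.Subset.antisymm hMK
      intro q hqK
      set c : WeakDual ℝ X := -q.1 with hcdef
      have hcx : ∀ x : X, c x = -(q.1 x) := fun x => rfl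
      have hbot : ⊥ < ⨅ x : F, ((c x.1 : ℝ) : EReal) := by
        refine lt_of_lt_of_le (EReal.bot_lt_coe (-q.2)) (le_iInf fun x => ?_)
        have := hqK x.1 x.2
        rw [EReal.coe_le_coe_iff, hcx]
        linarith
      obtain ⟨u, l, hl, heq, hval⟩ := hsd c hbot
      have heq' : ∀ x : X, l (A u x) = q.1 x := by
        intro x
        rw [heq x, hcx]
        ring
      have hlω : l (ω u) ≤ q.2 := by
        have h1 : ((-q.2 : ℝ) : EReal) ≤ ((-(l (ω u)) : ℝ) : EReal) := by
          rw [hval]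
          refine le_iInf fun x => ?_
          have := hqK x.1 x.2
          rw [EReal.coe_le_coe_iff, hcx]
          linarith
        rw [EReal.coe_le_coe_iff] at h1
        linarith
      refine ⟨(q.1, l (ω u)), ⟨u, l, hl, fun x => (heq' x).symm, rfl⟩,
        (0, q.2 - l (ω u)), ⟨rfl, by show (0:ℝ) ≤ q.2 - l (ω u); linarith⟩, ?_⟩
      apply Prod.ext
      · show q.1 + 0 = q.1
        rw [add_zero]
      · show l (ω u) + (q.2 - l (ω u)) = q.2
        ring
    rw [hKeq]
    exact ⟨hK_closed, hK_conv⟩
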